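/- arXiv:1710.04557 — 2 statements merged into one kernel-verified Lean document; each statement's English description precedes it below -/
import Mathlib

section
/- Let g and ψ be non-negative multiplicative functions on ℕ and set h = 1 * ψ (Dirichlet convolution, so h(n) = ∑_{d | n} ψ(d)). Then for every real z ≥ 1, ∑_{a ≤ z} g(a) h(a) ≤ M · ∑_{a ≤ z} g(a), where M = ∏_{p ≤ z} [1 + ∑_{v=1}^{⌊log z / log p⌋} ψ(p^v) ∑_{j=v}^{∞} g(p^j)] (assuming all the series ∑_{j≥v} g(p^j) converge and the product is finite). -/
open scoped Classical

lemma fact_prod_pow (f : ℕ → ℕ) (t : Finset ℕ) (ht : ∀ p ∈ t, Nat.Prime p) (q : ℕ) :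
    (∏ p ∈ t, p ^ f p).factorization q = if q ∈ t then f q else 0 := by
  induction t using Finset.induction_on with
  | empty => simp
  | @insert p t hpt ih =>
    have hp := ht p (Finset.mem_insert_self p t)
    have ht' : ∀ r ∈ t, Nat.Prime r := fun r hr => ht r (Finset.mem_insert_of_mem hr)
    have h1 : (p:ℕ) ^ f p ≠ 0 := pow_ne_zero _ hp.pos.ne'
    have h2 : (∏ r ∈ t, r ^ f r) ≠ 0 :=
      Finset.prod_ne_zero_iff.mpr fun r hr => pow_ne_zero _ (ht' r hr).pos.ne'
    rw [Finset.prod_insert hpt, Nat.factorization_mul h1 h2, Finsupp.add_apply, ih ht',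
      hp.factorization_pow, Finsupp.single_apply]
    by_cases hqp : q = p
    · subst hqp; simp [hpt]
    · simp [hqp, Ne.symm hqp, Finset.mem_insert]

lemma strip_fiber (F : ℕ → ℝ) (p : ℕ) (s : Finset ℕ) (v : ℕ) :
    ∑ d ∈ s.filter (fun d => d.factorization p = v), F d
      = ∑ d' ∈ (s.filter (fun d => d.factorization p = v)).image (fun d => d / p ^ v),
          F (p ^ v * d') := by
  rw [Finset.sum_image]
  · refine Finset.sum_congr rfl fun d hd => ?_
    obtain ⟨-, hv⟩ := Finset.mem_filter.mp hd
    rw [← hv, Nat.ordProj_mul_ordCompl_eq_self]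
  · intro x hx y hy hxy
    obtain ⟨-, hvx⟩ := Finset.mem_filter.mp hx
    obtain ⟨-, hvy⟩ := Finset.mem_filter.mp hy
    have hx' := Nat.ordProj_mul_ordCompl_eq_self x p
    have hy' := Nat.ordProj_mul_ordCompl_eq_self y p
    rw [hvx] at hx'; rw [hvy] at hy'
    rw [← hx', ← hy', show x / p ^ v = y / p ^ v from hxy]

lemma image_strip_props (p : ℕ) (hp : Nat.Prime p) (Q : Finset ℕ) (hpQ : p ∉ Q)
    (s : Finset ℕ) (v : ℕ)
    (hs : ∀ d ∈ s, d ≠ 0 ∧ d.primeFactors ⊆ insert p Q) :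
    ∀ d' ∈ (s.filter (fun d => d.factorization p = v)).image (fun d => d / p ^ v),
      d' ≠ 0 ∧ d'.primeFactors ⊆ Q ∧ ¬ p ∣ d' ∧
      ∃ d ∈ s, d.factorization p = v ∧ ∀ q, q ≠ p → d'.factorization q = d.factorization q := by
  intro d' hd'
  obtain ⟨d, hd, rfl⟩ := Finset.mem_image.mp hd'
  obtain ⟨hds, hv⟩ := Finset.mem_filter.mp hd
  obtain ⟨hd0, hpf⟩ := hs d hds
  subst hv
  have h0 : d / p ^ d.factorization p ≠ 0 := (Nat.ordCompl_pos p hd0).ne'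
  have hfact : (d / p ^ d.factorization p).factorization = d.factorization.erase p :=
    Nat.factorization_ordCompl d p
  have hnd : ¬ p ∣ d / p ^ d.factorization p := Nat.not_dvd_ordCompl hp hd0
  refine ⟨h0, ?_, hnd, d, hds, rfl, ?_⟩
  · intro q hq
    rw [← Nat.support_factorization, hfact] at hq
    have hqne : (d.factorization.erase p) q ≠ 0 := Finsupp.mem_support_iff.mp hq
    have hqp : q ≠ p := by rintro rfl; exact hqne Finsupp.erase_same
    have hdq : d.factorization q ≠ 0 := by rwa [Finsupp.erase_ne hqp] at hqne
    have : q ∈ d.primeFactors := by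
      rw [← Nat.support_factorization]; exact Finsupp.mem_support_iff.mpr hdq
    rcases Finset.mem_insert.mp (hpf this) with h | h
    · exact absurd h hqp
    · exact h
  · intro q hqp
    rw [hfact, Finsupp.erase_ne hqp]

lemma sum_le_prod_tsum (g : ℕ → ℝ) (hg0 : ∀ n, 0 ≤ g n) (hg1 : g 1 = 1)
    (hgmul : ∀ m n : ℕ, Nat.Coprime m n → g (m * n) = g m * g n)
    (hsum : ∀ p : ℕ, p.Prime → Summable fun j : ℕ => g (p ^ j))
    (V : ℕ → ℕ) (Q : Finset ℕ) :
    ∀ _ : ∀ p ∈ Q, Nat.Prime p,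
    ∀ s : Finset ℕ, (∀ c ∈ s, c ≠ 0 ∧ c.primeFactors ⊆ Q ∧ ∀ p ∈ Q, V p ≤ c.factorization p) →
    ∑ c ∈ s, g c ≤ ∏ p ∈ Q, ∑' j : ℕ, g (p ^ (V p + j)) := by
  induction Q using Finset.induction_on with
  | empty =>
    intro _ s hs
    simp only [Finset.prod_empty]
    have hsub : s ⊆ {1} := by
      intro c hc
      obtain ⟨hc0, hpf, -⟩ := hs c hc
      have : c = 1 := by
        by_contra hne
        obtain ⟨p, hp, hpd⟩ := Nat.exists_prime_and_dvd hne
        have : p ∈ c.primeFactors := Nat.mem_primeFactors.mpr ⟨hp, hpd, hc0⟩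
        simpa using hpf this
      simp [this]
    calc ∑ c ∈ s, g c ≤ ∑ c ∈ ({1} : Finset ℕ), g c :=
          Finset.sum_le_sum_of_subset_of_nonneg hsub (fun i _ _ => hg0 i)
      _ = 1 := by simp [hg1]
  | @insert p Q hpQ ih =>
    intro hQ s hs
    have hp : Nat.Prime p := hQ p (Finset.mem_insert_self p Q)
    have hQ' : ∀ q ∈ Q, Nat.Prime q := fun q hq => hQ q (Finset.mem_insert_of_mem hq)
    set P2 : ℝ := ∏ q ∈ Q, ∑' j : ℕ, g (q ^ (V q + j)) with hP2
    have hP20 : 0 ≤ P2 := Finset.prod_nonneg fun q _ => tsum_nonneg fun j => hg0 _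
    set J : ℕ := max (V p) (s.sup fun d => d.factorization p) with hJ
    have hmapsto : ∀ d ∈ s, d.factorization p ∈ Finset.range (J + 1) := by
      intro d hd
      simp only [Finset.mem_range, Nat.lt_succ_iff, hJ]
      exact le_max_of_le_right (Finset.le_sup (f := fun d => d.factorization p) hd)
    rw [← Finset.sum_fiberwise_of_maps_to hmapsto, Finset.prod_insert hpQ]
    have hIccsub : Finset.Icc (V p) J ⊆ Finset.range (J + 1) := by
      intro v hv; rw [Finset.mem_range, Nat.lt_succ_iff]; exact (Finset.mem_Icc.mp hv).2
    have hzero : ∀ v ∈ Finset.range (J + 1), v ∉ Finset.Icc (V p) J →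
        ∑ d ∈ s.filter (fun d => d.factorization p = v), g d = 0 := by
      intro v hv hv'
      refine Finset.sum_eq_zero fun d hd => ?_
      obtain ⟨hds, hfd⟩ := Finset.mem_filter.mp hd
      exfalso
      apply hv'
      rw [Finset.mem_Icc]
      have h1 : V p ≤ v := by
        rw [← hfd]; exact (hs d hds).2.2 p (Finset.mem_insert_self p Q)
      have h2 : v < J + 1 := Finset.mem_range.mp hv
      exact ⟨h1, by omega⟩
    rw [← Finset.sum_subset hIccsub hzero]
    have hfiber : ∀ v ∈ Finset.Icc (V p) J,
        ∑ d ∈ s.filter (fun d => d.factorization p = v), g d ≤ g (p ^ v) * P2 := by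
      intro v _
      rw [strip_fiber]
      have hprops := image_strip_props p hp Q hpQ s v
        (fun d hd => ⟨(hs d hd).1, (hs d hd).2.1⟩)
      have hcongr : ∀ d' ∈ (s.filter (fun d => d.factorization p = v)).image (fun d => d / p ^ v),
          g (p ^ v * d') = g (p ^ v) * g d' := by
        intro d' hd'
        obtain ⟨-, -, hnd, -⟩ := hprops d' hd'
        exact hgmul _ _ (Nat.Coprime.pow_left _ ((Nat.Prime.coprime_iff_not_dvd hp).mpr hnd))
      rw [Finset.sum_congr rfl hcongr, ← Finset.mul_sum]
      have hIH : ∑ d' ∈ (s.filter (fun d => d.factorization p = v)).image (fun d => d / p ^ v),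
          g d' ≤ P2 := by
        refine ih hQ' _ fun d' hd' => ?_
        obtain ⟨h0, hpf, -, d, hds, -, hfq⟩ := hprops d' hd'
        refine ⟨h0, hpf, fun q hq => ?_⟩
        have hqp : q ≠ p := fun h => hpQ (h ▸ hq)
        rw [hfq q hqp]
        exact (hs d hds).2.2 q (Finset.mem_insert_of_mem hq)
      exact mul_le_mul_of_nonneg_left hIH (hg0 _)
    calc ∑ v ∈ Finset.Icc (V p) J, ∑ d ∈ s.filter (fun d => d.factorization p = v), g d
        ≤ ∑ v ∈ Finset.Icc (V p) J, g (p ^ v) * P2 := Finset.sum_le_sum hfiber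
      _ = (∑ v ∈ Finset.Icc (V p) J, g (p ^ v)) * P2 := by rw [Finset.sum_mul]
      _ ≤ (∑' j : ℕ, g (p ^ (V p + j))) * P2 := by
          refine mul_le_mul_of_nonneg_right ?_ hP20
          have hre : ∑ v ∈ Finset.Icc (V p) J, g (p ^ v)
              = ∑ i ∈ Finset.range (J + 1 - V p), g (p ^ (V p + i)) := by
            rw [← Finset.Ico_add_one_right_eq_Icc, Finset.sum_Ico_eq_sum_range]
          rw [hre]
          refine Summable.sum_le_tsum _ (fun i _ => hg0 _) ?_
          exact (hsum p hp).comp_injective (fun a b h => by omega)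

lemma prod_factor_split (c : ℕ → ℕ → ℝ) (p : ℕ) (hp : Nat.Prime p) (v : ℕ) (d' : ℕ)
    (hd'0 : d' ≠ 0) (hnd : ¬ p ∣ d') :
    ∏ q ∈ (p ^ v * d').primeFactors, c q ((p ^ v * d').factorization q)
      = (if v = 0 then 1 else c p v) *
        ∏ q ∈ d'.primeFactors, c q (d'.factorization q) := by
  rcases Nat.eq_zero_or_pos v with rfl | hv
  · simp
  have hv0 : v ≠ 0 := hv.ne'
  have h1 : (p : ℕ) ^ v ≠ 0 := pow_ne_zero _ hp.pos.ne'
  have hpf : (p ^ v * d').primeFactors = insert p d'.primeFactors := by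
    rw [Nat.primeFactors_mul h1 hd'0, Nat.primeFactors_prime_pow hv0 hp]
    rfl
  have hpnotin : p ∉ d'.primeFactors := fun h => hnd (Nat.dvd_of_mem_primeFactors h)
  have hfact : ∀ q, (p ^ v * d').factorization q
      = (Finsupp.single p v) q + d'.factorization q := by
    intro q
    rw [Nat.factorization_mul h1 hd'0, hp.factorization_pow]
    rfl
  rw [hpf, Finset.prod_insert hpnotin, if_neg hv0]
  congr 1
  · rw [hfact p, Finsupp.single_eq_same, Nat.factorization_eq_zero_of_not_dvd hnd, add_zero]
  · refine Finset.prod_congr rfl fun q hq => ?_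
    have hqp : q ≠ p := fun h => hpnotin (h ▸ hq)
    rw [hfact q, Finsupp.single_eq_of_ne' (Ne.symm hqp), zero_add]

lemma sum_prod_le (c : ℕ → ℕ → ℝ) (hc : ∀ p v, 0 ≤ c p v) (V : ℕ → ℕ) (Q : Finset ℕ) :
    ∀ _ : ∀ p ∈ Q, Nat.Prime p,
    ∀ s : Finset ℕ, (∀ d ∈ s, d ≠ 0 ∧ d.primeFactors ⊆ Q ∧ ∀ p ∈ Q, d.factorization p ≤ V p) →
    ∑ d ∈ s, ∏ q ∈ d.primeFactors, c q (d.factorization q)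
      ≤ ∏ p ∈ Q, (1 + ∑ v ∈ Finset.Icc 1 (V p), c p v) := by
  induction Q using Finset.induction_on with
  | empty =>
    intro _ s hs
    simp only [Finset.prod_empty]
    have hsub : s ⊆ {1} := by
      intro d hd
      obtain ⟨hd0, hpf, -⟩ := hs d hd
      have : d = 1 := by
        by_contra hne
        obtain ⟨p, hp, hpd⟩ := Nat.exists_prime_and_dvd hne
        have : p ∈ d.primeFactors := Nat.mem_primeFactors.mpr ⟨hp, hpd, hd0⟩
        simpa using hpf this
      simp [this]
    calc ∑ d ∈ s, ∏ q ∈ d.primeFactors, c q (d.factorization q)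
        ≤ ∑ d ∈ ({1} : Finset ℕ), ∏ q ∈ d.primeFactors, c q (d.factorization q) :=
          Finset.sum_le_sum_of_subset_of_nonneg hsub
            (fun d _ _ => Finset.prod_nonneg fun q _ => hc _ _)
      _ = 1 := by simp
  | @insert p Q hpQ ih =>
    intro hQ s hs
    have hp : Nat.Prime p := hQ p (Finset.mem_insert_self p Q)
    have hQ' : ∀ q ∈ Q, Nat.Prime q := fun q hq => hQ q (Finset.mem_insert_of_mem hq)
    set P2 : ℝ := ∏ q ∈ Q, (1 + ∑ v ∈ Finset.Icc 1 (V q), c q v) with hP2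
    have hP20 : 0 ≤ P2 := Finset.prod_nonneg fun q _ => by
      have : 0 ≤ ∑ v ∈ Finset.Icc 1 (V q), c q v := Finset.sum_nonneg fun v _ => hc _ _
      linarith
    have hmapsto : ∀ d ∈ s, d.factorization p ∈ Finset.range (V p + 1) := by
      intro d hd
      simp only [Finset.mem_range, Nat.lt_succ_iff]
      exact (hs d hd).2.2 p (Finset.mem_insert_self p Q)
    rw [← Finset.sum_fiberwise_of_maps_to hmapsto, Finset.prod_insert hpQ]
    have hfiber : ∀ v ∈ Finset.range (V p + 1),
        ∑ d ∈ s.filter (fun d => d.factorization p = v),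
            ∏ q ∈ d.primeFactors, c q (d.factorization q)
          ≤ (if v = 0 then 1 else c p v) * P2 := by
      intro v _
      rw [strip_fiber]
      have hprops := image_strip_props p hp Q hpQ s v
        (fun d hd => ⟨(hs d hd).1, (hs d hd).2.1⟩)
      have hcongr : ∀ d' ∈ (s.filter (fun d => d.factorization p = v)).image (fun d => d / p ^ v),
          ∏ q ∈ (p ^ v * d').primeFactors, c q ((p ^ v * d').factorization q)
            = (if v = 0 then 1 else c p v) *
              ∏ q ∈ d'.primeFactors, c q (d'.factorization q) := by
        intro d' hd'
        obtain ⟨h0, -, hnd, -⟩ := hprops d' hd'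
        exact prod_factor_split c p hp v d' h0 hnd
      rw [Finset.sum_congr rfl hcongr, ← Finset.mul_sum]
      have hIH : ∑ d' ∈ (s.filter (fun d => d.factorization p = v)).image (fun d => d / p ^ v),
          ∏ q ∈ d'.primeFactors, c q (d'.factorization q) ≤ P2 := by
        refine ih hQ' _ fun d' hd' => ?_
        obtain ⟨h0, hpf, -, d, hds, -, hfq⟩ := hprops d' hd'
        refine ⟨h0, hpf, fun q hq => ?_⟩
        have hqp : q ≠ p := fun h => hpQ (h ▸ hq)
        rw [hfq q hqp]
        exact (hs d hds).2.2 q (Finset.mem_insert_of_mem hq)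
      refine mul_le_mul_of_nonneg_left hIH ?_
      rcases Nat.eq_zero_or_pos v with rfl | hv
      · simp
      · rw [if_neg hv.ne']; exact hc _ _
    calc ∑ v ∈ Finset.range (V p + 1), ∑ d ∈ s.filter (fun d => d.factorization p = v),
            ∏ q ∈ d.primeFactors, c q (d.factorization q)
        ≤ ∑ v ∈ Finset.range (V p + 1), (if v = 0 then 1 else c p v) * P2 :=
          Finset.sum_le_sum hfiber
      _ = (∑ v ∈ Finset.range (V p + 1), (if v = 0 then 1 else c p v)) * P2 := by
          rw [Finset.sum_mul]
      _ = (1 + ∑ v ∈ Finset.Icc 1 (V p), c p v) * P2 := by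
          congr 1
          have hins : Finset.range (V p + 1) = insert 0 (Finset.Icc 1 (V p)) := by
            ext x; simp [Finset.mem_range, Finset.mem_Icc, Finset.mem_insert]; omega
          rw [hins, Finset.sum_insert (by simp), if_pos rfl]
          congr 1
          refine Finset.sum_congr rfl fun v hv => ?_
          have : 1 ≤ v := (Finset.mem_Icc.mp hv).1
          rw [if_neg (by omega)]

lemma per_d (g : ℕ → ℝ) (hg0 : ∀ n, 0 ≤ g n) (hg1 : g 1 = 1)
    (hgmul : ∀ m n : ℕ, Nat.Coprime m n → g (m * n) = g m * g n)
    (hsum : ∀ p : ℕ, p.Prime → Summable fun j : ℕ => g (p ^ j))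
    (N d : ℕ) (hd : d ≠ 0) :
    ∑ a ∈ (Finset.Icc 1 N).filter (fun a => d ∣ a), g a
      ≤ (∏ p ∈ d.primeFactors, ∑' j : ℕ, g (p ^ (d.factorization p + j))) *
        ∑ b ∈ Finset.Icc 1 N, g b := by
  classical
  set s := (Finset.Icc 1 N).filter (fun a => d ∣ a) with hsdef
  set cmap : ℕ → ℕ := fun a => ∏ p ∈ d.primeFactors, p ^ a.factorization p with hcmap
  have hQprime : ∀ p ∈ d.primeFactors, Nat.Prime p := fun p hp => Nat.prime_of_mem_primeFactors hp
  have hcfact : ∀ a q, (cmap a).factorization q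
      = if q ∈ d.primeFactors then a.factorization q else 0 := by
    intro a q; exact fact_prod_pow _ _ hQprime q
  have hc0 : ∀ a, cmap a ≠ 0 := fun a =>
    Finset.prod_ne_zero_iff.mpr fun p hp => pow_ne_zero _ (hQprime p hp).pos.ne'
  -- facts about members of s
  have hmem : ∀ a ∈ s, 1 ≤ a ∧ a ≤ N ∧ d ∣ a := by
    intro a ha
    obtain ⟨hIcc, hdvd⟩ := Finset.mem_filter.mp ha
    obtain ⟨h1, h2⟩ := Finset.mem_Icc.mp hIcc
    exact ⟨h1, h2, hdvd⟩
  have hcdvd : ∀ a ∈ s, cmap a ∣ a := by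
    intro a ha
    obtain ⟨h1, -, -⟩ := hmem a ha
    have ha0 : a ≠ 0 := by omega
    refine (Nat.factorization_le_iff_dvd (hc0 a) ha0).mp (Finsupp.le_def.mpr fun q => ?_)
    rw [hcfact a q]
    split <;> simp
  have hsplit : ∀ a ∈ s, a = cmap a * (a / cmap a) := fun a ha =>
    (Nat.mul_div_cancel' (hcdvd a ha)).symm
  have hb0 : ∀ a ∈ s, a / cmap a ≠ 0 := by
    intro a ha
    obtain ⟨h1, -, -⟩ := hmem a ha
    have := hsplit a ha
    intro hb
    rw [hb, mul_zero] at this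
    omega
  have hcop : ∀ a ∈ s, Nat.Coprime (cmap a) (a / cmap a) := by
    intro a ha
    obtain ⟨h1, -, -⟩ := hmem a ha
    have ha0 : a ≠ 0 := by omega
    refine (Nat.disjoint_primeFactors (hc0 a) (hb0 a ha)).mp (Finset.disjoint_left.mpr ?_)
    intro q hq
    have hqd : q ∈ d.primeFactors := by
      by_contra hqd
      have := Nat.mem_primeFactors.mp hq
      have h0 : (cmap a).factorization q = 0 := by rw [hcfact a q, if_neg hqd]
      rw [← Nat.support_factorization] at hq
      exact Finsupp.mem_support_iff.mp hq h0
    have hbf : (a / cmap a).factorization q = 0 := by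
      rw [Nat.factorization_div (hcdvd a ha)]
      simp only [Finsupp.tsub_apply]
      rw [hcfact a q, if_pos hqd]
      omega
    rw [← Nat.support_factorization]
    exact fun hmem' => Finsupp.mem_support_iff.mp hmem' hbf
  have hgsplit : ∀ a ∈ s, g a = g (cmap a) * g (a / cmap a) := by
    intro a ha
    conv_lhs => rw [hsplit a ha]
    exact hgmul _ _ (hcop a ha)
  -- reindex by the injective pair map
  set e : ℕ → ℕ × ℕ := fun a => (cmap a, a / cmap a) with he
  have hinj : ∀ x ∈ s, ∀ y ∈ s, e x = e y → x = y := by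
    intro x hx y hy hxy
    have h1 : cmap x = cmap y := congrArg Prod.fst hxy
    have h2 : x / cmap x = y / cmap y := congrArg Prod.snd hxy
    calc x = cmap x * (x / cmap x) := hsplit x hx
      _ = cmap y * (y / cmap y) := by rw [h2, h1]
      _ = y := (hsplit y hy).symm
  have step1 : ∑ a ∈ s, g a = ∑ q ∈ s.image e, g q.1 * g q.2 := by
    rw [Finset.sum_image hinj]
    exact Finset.sum_congr rfl hgsplit
  have hsubset : s.image e ⊆ (s.image cmap) ×ˢ Finset.Icc 1 N := by
    intro q hq
    obtain ⟨a, ha, rfl⟩ := Finset.mem_image.mp hq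
    obtain ⟨h1, h2, -⟩ := hmem a ha
    refine Finset.mem_product.mpr ⟨Finset.mem_image_of_mem _ ha, Finset.mem_Icc.mpr ⟨?_, ?_⟩⟩
    · exact Nat.one_le_iff_ne_zero.mpr (hb0 a ha)
    · exact le_trans (Nat.div_le_self a (cmap a)) h2
  have step2 : ∑ q ∈ s.image e, g q.1 * g q.2
      ≤ ∑ q ∈ (s.image cmap) ×ˢ Finset.Icc 1 N, g q.1 * g q.2 :=
    Finset.sum_le_sum_of_subset_of_nonneg hsubset
      (fun q _ _ => mul_nonneg (hg0 _) (hg0 _))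
  have step3 : ∑ q ∈ (s.image cmap) ×ˢ Finset.Icc 1 N, g q.1 * g q.2
      = (∑ x ∈ s.image cmap, g x) * ∑ b ∈ Finset.Icc 1 N, g b := by
    rw [Finset.sum_mul_sum, Finset.sum_product]
  have step4 : ∑ x ∈ s.image cmap, g x
      ≤ ∏ p ∈ d.primeFactors, ∑' j : ℕ, g (p ^ (d.factorization p + j)) := by
    refine sum_le_prod_tsum g hg0 hg1 hgmul hsum (fun p => d.factorization p)
      d.primeFactors hQprime _ ?_
    intro x hx
    obtain ⟨a, ha, rfl⟩ := Finset.mem_image.mp hx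
    obtain ⟨h1, -, hdvd⟩ := hmem a ha
    have ha0 : a ≠ 0 := by omega
    have hdle : d.factorization ≤ a.factorization :=
      (Nat.factorization_le_iff_dvd hd ha0).mpr hdvd
    refine ⟨hc0 a, ?_, ?_⟩
    · intro q hq
      rw [← Nat.support_factorization] at hq
      have := Finsupp.mem_support_iff.mp hq
      rw [hcfact a q] at this
      by_contra hqd
      rw [if_neg hqd] at this
      exact this rfl
    · intro p hp
      rw [hcfact a p, if_pos hp]
      exact hdle p
  calc ∑ a ∈ s, g a = ∑ q ∈ s.image e, g q.1 * g q.2 := step1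
    _ ≤ ∑ q ∈ (s.image cmap) ×ˢ Finset.Icc 1 N, g q.1 * g q.2 := step2
    _ = (∑ x ∈ s.image cmap, g x) * ∑ b ∈ Finset.Icc 1 N, g b := step3
    _ ≤ _ := mul_le_mul_of_nonneg_right step4 (Finset.sum_nonneg fun b _ => hg0 b)

/-- Decoupling lemma: for non-negative multiplicative `g, ψ` with `h = 1 * ψ`
(Dirichlet convolution), and `z ≥ 1`,
`∑_{a ≤ z} g(a) h(a) ≤ M(g,ψ) ∑_{a ≤ z} g(a)` where
`M = ∏_{p ≤ z} [1 + ∑_{v=1}^{⌊log z/log p⌋} ψ(p^v) ∑_{j ≥ v} g(p^j)]`. -/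
theorem stmt_3 (g ψ : ℕ → ℝ)
    (hg0 : ∀ n, 0 ≤ g n) (hψ0 : ∀ n, 0 ≤ ψ n)
    (hg1 : g 1 = 1) (hgmul : ∀ m n : ℕ, Nat.Coprime m n → g (m * n) = g m * g n)
    (hψ1 : ψ 1 = 1) (hψmul : ∀ m n : ℕ, Nat.Coprime m n → ψ (m * n) = ψ m * ψ n)
    (hsum : ∀ p : ℕ, p.Prime → Summable fun j : ℕ => g (p ^ j))
    (z : ℝ) (hz : 1 ≤ z) :
    ∑ a ∈ Finset.Icc 1 ⌊z⌋₊, g a * (∑ d ∈ a.divisors, ψ d) ≤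
      (∏ p ∈ (Finset.Icc 1 ⌊z⌋₊).filter Nat.Prime,
          (1 + ∑ v ∈ Finset.Icc 1 ⌊Real.log z / Real.log (p : ℝ)⌋₊,
            ψ (p ^ v) * ∑' j : ℕ, g (p ^ (v + j)))) *
        ∑ a ∈ Finset.Icc 1 ⌊z⌋₊, g a := by
  classical
  set N := ⌊z⌋₊ with hN
  have hNz : (N : ℝ) ≤ z := Nat.floor_le (by linarith)
  set B := ∑ a ∈ Finset.Icc 1 N, g a with hB
  have hB0 : 0 ≤ B := Finset.sum_nonneg fun a _ => hg0 a
  set c : ℕ → ℕ → ℝ := fun p v => ψ (p ^ v) * ∑' j : ℕ, g (p ^ (v + j)) with hc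
  have hc0 : ∀ p v, 0 ≤ c p v := fun p v =>
    mul_nonneg (hψ0 _) (tsum_nonneg fun j => hg0 _)
  set W : ℕ → ℝ := fun d => ∏ q ∈ d.primeFactors, c q (d.factorization q) with hW
  -- Step A : swap sums
  have stepA : ∑ a ∈ Finset.Icc 1 N, g a * (∑ d ∈ a.divisors, ψ d)
      = ∑ d ∈ Finset.Icc 1 N, ψ d * ∑ a ∈ (Finset.Icc 1 N).filter (fun a => d ∣ a), g a := by
    have h1 : ∀ a ∈ Finset.Icc 1 N, g a * (∑ d ∈ a.divisors, ψ d)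
        = ∑ d ∈ a.divisors, g a * ψ d := fun a _ => Finset.mul_sum _ _ _
    rw [Finset.sum_congr rfl h1]
    rw [Finset.sum_comm' (t := fun a => a.divisors)
      (s' := fun d => (Finset.Icc 1 N).filter (fun a => d ∣ a)) (t' := Finset.Icc 1 N) ?_]
    · refine Finset.sum_congr rfl fun d _ => ?_
      rw [Finset.mul_sum]
      exact Finset.sum_congr rfl fun a _ => mul_comm _ _
    · intro a d
      constructor
      · rintro ⟨ha, hd⟩
        obtain ⟨h1a, h2a⟩ := Finset.mem_Icc.mp ha
        obtain ⟨hdvd, ha0⟩ := Nat.mem_divisors.mp hd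
        refine ⟨Finset.mem_filter.mpr ⟨ha, hdvd⟩, Finset.mem_Icc.mpr ⟨?_, ?_⟩⟩
        · exact Nat.pos_of_dvd_of_pos hdvd (by omega)
        · exact le_trans (Nat.le_of_dvd (by omega) hdvd) h2a
      · rintro ⟨haf, hd⟩
        obtain ⟨ha, hdvd⟩ := Finset.mem_filter.mp haf
        obtain ⟨h1a, h2a⟩ := Finset.mem_Icc.mp ha
        exact ⟨ha, Nat.mem_divisors.mpr ⟨hdvd, by omega⟩⟩
  -- Step B : per-divisor bound
  have stepB : ∀ d ∈ Finset.Icc 1 N,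
      ψ d * ∑ a ∈ (Finset.Icc 1 N).filter (fun a => d ∣ a), g a ≤ W d * B := by
    intro d hd
    obtain ⟨hd1, hd2⟩ := Finset.mem_Icc.mp hd
    have hd0 : d ≠ 0 := by omega
    have hψd : ψ d = ∏ p ∈ d.primeFactors, ψ (p ^ d.factorization p) := by
      rw [Nat.multiplicative_factorization ψ hψmul hψ1 hd0]
      rw [Finsupp.prod, Nat.support_factorization]
    have hperd := per_d g hg0 hg1 hgmul hsum N d hd0
    calc ψ d * ∑ a ∈ (Finset.Icc 1 N).filter (fun a => d ∣ a), g a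
        ≤ ψ d * ((∏ p ∈ d.primeFactors, ∑' j : ℕ, g (p ^ (d.factorization p + j))) * B) :=
          mul_le_mul_of_nonneg_left hperd (hψ0 d)
      _ = W d * B := by
          rw [hψd, hW, ← mul_assoc, ← Finset.prod_mul_distrib]
  -- Step C : bound sum of W by product M
  have stepC : ∑ d ∈ Finset.Icc 1 N, W d
      ≤ ∏ p ∈ (Finset.Icc 1 N).filter Nat.Prime,
          (1 + ∑ v ∈ Finset.Icc 1 ⌊Real.log z / Real.log (p : ℝ)⌋₊, c p v) := by
    refine sum_prod_le c hc0 (fun p => ⌊Real.log z / Real.log (p : ℝ)⌋₊)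
      ((Finset.Icc 1 N).filter Nat.Prime)
      (fun p hp => (Finset.mem_filter.mp hp).2) _ ?_
    intro d hd
    obtain ⟨hd1, hd2⟩ := Finset.mem_Icc.mp hd
    have hd0 : d ≠ 0 := by omega
    refine ⟨hd0, ?_, ?_⟩
    · intro p hp
      have hpp := Nat.prime_of_mem_primeFactors hp
      have hpd := Nat.dvd_of_mem_primeFactors hp
      refine Finset.mem_filter.mpr ⟨Finset.mem_Icc.mpr ⟨hpp.one_lt.le.trans' (by norm_num), ?_⟩, hpp⟩
      exact le_trans (Nat.le_of_dvd (by omega) hpd) hd2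
    · intro p hp
      obtain ⟨hpIcc, hpp⟩ := Finset.mem_filter.mp hp
      set v := d.factorization p with hv
      have hdvd : p ^ v ∣ d := Nat.ordProj_dvd d p
      have hle : p ^ v ≤ N := le_trans (Nat.le_of_dvd (by omega) hdvd) hd2
      have hrle : ((p : ℝ)) ^ v ≤ z := by
        calc ((p : ℝ)) ^ v = ((p ^ v : ℕ) : ℝ) := by push_cast; ring
          _ ≤ (N : ℝ) := by exact_mod_cast hle
          _ ≤ z := hNz
      have hlogp : 0 < Real.log p := Real.log_pos (by exact_mod_cast hpp.one_lt)
      have hlog : (v : ℝ) * Real.log p ≤ Real.log z := by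
        rw [← Real.log_pow]
        exact Real.log_le_log (pow_pos (by exact_mod_cast hpp.pos) v) hrle
      refine Nat.le_floor ?_
      rw [le_div_iff₀ hlogp]
      exact hlog
  -- assemble
  calc ∑ a ∈ Finset.Icc 1 N, g a * (∑ d ∈ a.divisors, ψ d)
      = ∑ d ∈ Finset.Icc 1 N, ψ d * ∑ a ∈ (Finset.Icc 1 N).filter (fun a => d ∣ a), g a :=
        stepA
    _ ≤ ∑ d ∈ Finset.Icc 1 N, W d * B := Finset.sum_le_sum stepB
    _ = (∑ d ∈ Finset.Icc 1 N, W d) * B := by rw [Finset.sum_mul]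
    _ ≤ _ := mul_le_mul_of_nonneg_right stepC hB0
end

section
/- Let q(x,y) ∈ ℤ[x,y] be a primitive binary quadratic form of discriminant D < 0, ω ∈ ℤ, and Q(x,y) = q(x,y) − ωD. Then for every prime power p^n, the number ρ_Q(p^n) of solutions (x,y) ∈ (ℤ/p^nℤ)² to Q(x,y) ≡ 0 (mod p^n) satisfies ρ_Q(p^n) ≤ 16 · p^{3n/2}. -/
open Finset

section Aux
variable {p n : ℕ}

lemma ker2_card (m : ℕ) [NeZero m] :
    (Finset.univ.filter (fun d : ZMod m => 2 * d = 0)).card ≤ 2 := by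
  classical
  have key : ∀ d : ZMod m, 2 * d = 0 → d.val = 0 ∨ 2 * d.val = m := by
    intro d hd
    have h1 : ((2 * d.val : ℕ) : ZMod m) = 0 := by
      push_cast
      simp [ZMod.natCast_val, hd]
    rw [ZMod.natCast_eq_zero_iff] at h1
    have h2 : 2 * d.val < 2 * m := by have := ZMod.val_lt d; omega
    rcases h1 with ⟨c, hc⟩
    have hc2 : c < 2 := by
      by_contra hcc
      push_neg at hcc
      have : 2 * m ≤ m * c := by
        calc 2 * m = m * 2 := by ring
        _ ≤ m * c := Nat.mul_le_mul_left m hcc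
      omega
    interval_cases c <;> omega
  have h := Finset.card_le_card_of_injOn (f := fun d : ZMod m => decide (d = 0))
    (s := Finset.univ.filter (fun d : ZMod m => 2 * d = 0)) (t := Finset.univ)
    (fun a _ => Finset.mem_univ _) ?_
  · calc _ ≤ Finset.univ.card := h
    _ = 2 := by simp
  · intro d1 h1 d2 h2 hb
    replace h1 := (Finset.mem_filter.mp h1).2
    replace h2 := (Finset.mem_filter.mp h2).2
    have hb' : (d1 = 0) ↔ (d2 = 0) := by simpa using hb
    by_cases hz : d1 = 0
    · rw [hz]; exact (hb'.mp hz).symm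
    · have hz2 : ¬ d2 = 0 := fun h => hz (hb'.mpr h)
      have e1 := (key d1 h1).resolve_left (fun h => hz ((ZMod.val_eq_zero d1).mp h))
      have e2 := (key d2 h2).resolve_left (fun h => hz2 ((ZMod.val_eq_zero d2).mp h))
      have : d1.val = d2.val := by omega
      exact ZMod.val_injective m this

lemma coset_card [NeZero (p^n)] (hp : p.Prime) {k : ℕ} (w : ZMod (p^n)) :
    (Finset.univ.filter (fun t : ZMod (p^n) => p^k ∣ (t - w).val)).card ≤ p^(n-k) := by
  classical
  have hpk : 0 < p^k := pow_pos hp.pos k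
  have h := Finset.card_le_card_of_injOn (f := fun t : ZMod (p^n) => (t - w).val / p^k)
    (s := Finset.univ.filter (fun t : ZMod (p^n) => p^k ∣ (t - w).val))
    (t := Finset.range (p^(n-k))) ?_ ?_
  · simpa using h
  · intro t ht
    rw [Finset.mem_coe, Finset.mem_range]
    have hv : (t - w).val < p^n := ZMod.val_lt _
    have hle : p^n ≤ p^(n-k) * p^k := by
      rw [← pow_add]; exact Nat.pow_le_pow_right hp.pos (by omega)
    exact Nat.div_lt_of_lt_mul (by rw [mul_comm]; omega)
  · intro t1 h1 t2 h2 he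
    replace h1 := (Finset.mem_filter.mp h1).2
    replace h2 := (Finset.mem_filter.mp h2).2
    have hv : (t1 - w).val = (t2 - w).val := by
      rcases h1 with ⟨c1, hc1⟩; rcases h2 with ⟨c2, hc2⟩
      simp only [hc1, hc2] at he ⊢
      rw [Nat.mul_div_cancel_left _ hpk, Nat.mul_div_cancel_left _ hpk] at he
      rw [he]
    have h3 : t1 - w = t2 - w := ZMod.val_injective _ hv
    have := congrArg (· + w) h3
    simpa using this

lemma nat_sqrt_dvd (hp : p.Prime) {T : ℕ} (h : p^n ∣ T^2) :
    p^((n+1)/2) ∣ T := by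
  rcases Nat.eq_zero_or_pos T with rfl | hT
  · exact dvd_zero _
  · have hT2 : T^2 ≠ 0 := by positivity
    rw [Nat.Prime.pow_dvd_iff_le_factorization hp hT2] at h
    rw [Nat.factorization_pow] at h
    simp only [Finsupp.smul_apply, smul_eq_mul] at h
    rw [Nat.Prime.pow_dvd_iff_le_factorization hp (by omega)]
    omega

lemma int_dvd_val [NeZero (p^n)] (hp : p.Prime) {k : ℕ} (hk : k ≤ n) (z : ZMod (p^n)) (X : ℤ)
    (hX : ((X : ℤ) : ZMod (p^n)) = z) (hd : (p:ℤ)^k ∣ X) :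
    p^k ∣ z.val := by
  have h1 : (((z.val : ℤ) - X : ℤ) : ZMod (p^n)) = 0 := by
    push_cast
    simp [ZMod.natCast_val, hX]
  rw [ZMod.intCast_zmod_eq_zero_iff_dvd] at h1
  have h2 : (p:ℤ)^k ∣ ((z.val : ℤ) - X) := dvd_trans (pow_dvd_pow (p:ℤ) hk) (by exact_mod_cast h1)
  have h3 : (p:ℤ)^k ∣ (z.val : ℤ) := by
    have := dvd_add h2 hd
    simpa using this
  exact_mod_cast h3

lemma sqrt_card [NeZero (p^n)] (hp : p.Prime) (u : ZMod (p^n)) :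
    (Finset.univ.filter (fun t : ZMod (p^n) => t^2 = u)).card ≤ 4 * p^(n/2) := by
  classical
  by_cases hu : u = 0
  · subst hu
    have hsub : (Finset.univ.filter (fun t : ZMod (p^n) => t^2 = 0)) ⊆
        (Finset.univ.filter (fun t : ZMod (p^n) => p^((n+1)/2) ∣ (t - 0).val)) := by
      intro t ht
      replace ht := (Finset.mem_filter.mp ht).2
      rw [Finset.mem_filter]
      refine ⟨Finset.mem_univ _, ?_⟩
      rw [sub_zero]
      apply nat_sqrt_dvd hp (n := n)
      have h1 : ((t.val^2 : ℕ) : ZMod (p^n)) = 0 := by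
        push_cast
        simp [ZMod.natCast_val, ht]
      rwa [ZMod.natCast_eq_zero_iff] at h1
    calc (Finset.univ.filter (fun t : ZMod (p^n) => t^2 = 0)).card
        ≤ (Finset.univ.filter (fun t : ZMod (p^n) => p^((n+1)/2) ∣ (t - 0).val)).card :=
          Finset.card_le_card hsub
      _ ≤ p^(n - (n+1)/2) := coset_card hp 0
      _ ≤ 4 * p^(n/2) := by
          have h1 : n - (n+1)/2 ≤ n/2 := by omega
          have h2 := Nat.pow_le_pow_right hp.pos h1
          omega
  · rcases Finset.eq_empty_or_nonempty
      (Finset.univ.filter (fun t : ZMod (p^n) => t^2 = u)) with he | ⟨t₀, ht₀⟩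
    · rw [he]; simp
    replace ht₀ := (Finset.mem_filter.mp ht₀).2
    have hT₀cast : ((t₀.val : ℕ) : ZMod (p^n)) = t₀ := by simp [ZMod.natCast_val]
    have hT₀ne : t₀.val ≠ 0 := by
      intro h
      apply hu
      rw [← ht₀, ← hT₀cast, h]
      push_cast
      ring
    set f : ℕ := (t₀.val).factorization p with hfdef
    have hpf : p^f ∣ t₀.val := Nat.ordProj_dvd _ p
    have hpf1 : ¬ p^(f+1) ∣ t₀.val := Nat.pow_succ_factorization_not_dvd hT₀ne hp
    have h2f : 2*f < n := by
      by_contra hc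
      push_neg at hc
      apply hu
      have hdvd : p^n ∣ (t₀.val)^2 := by
        calc p^n ∣ p^(2*f) := pow_dvd_pow p hc
          _ ∣ (t₀.val)^2 := by
              rcases hpf with ⟨d, hd⟩
              exact ⟨d^2, by rw [hd]; ring⟩
      have h1 : (((t₀.val)^2 : ℕ) : ZMod (p^n)) = 0 := by
        rw [ZMod.natCast_eq_zero_iff]; exact hdvd
      rw [← ht₀, ← hT₀cast]
      push_cast at h1 ⊢
      rw [← h1]
    set v2 : ℕ := if p = 2 then 1 else 0 with hv2def
    have hv2le : p^v2 ≤ 2 := by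
      rcases eq_or_ne p 2 with h2 | h2
      · simp [hv2def, h2]
      · simp [hv2def, h2]
    have hv2le1 : v2 ≤ 1 := by
      rcases eq_or_ne p 2 with h2 | h2 <;> simp [hv2def, h2]
    set k : ℕ := n - f - v2 with hkdef
    have hkn : k ≤ n := by omega
    have hnk : n - k = f + v2 := by omega
    have main : ∀ t : ZMod (p^n), t^2 = u →
        p^k ∣ (t - t₀).val ∨ p^k ∣ (t - (-t₀)).val := by
      intro t ht
      have hTcast : ((t.val : ℕ) : ZMod (p^n)) = t := by simp [ZMod.natCast_val]
      have hXcast : (((t.val : ℤ) - (t₀.val : ℤ) : ℤ) : ZMod (p^n)) = t - t₀ := by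
        push_cast
        rw [hTcast, hT₀cast]
      have hYcast : (((t.val : ℤ) + (t₀.val : ℤ) : ℤ) : ZMod (p^n)) = t - (-t₀) := by
        push_cast
        rw [hTcast, hT₀cast]
        ring
      have hXY : (p:ℤ)^n ∣ ((t.val : ℤ) - (t₀.val : ℤ)) * ((t.val : ℤ) + (t₀.val : ℤ)) := by
        have h1 : ((((t.val : ℤ) - (t₀.val : ℤ)) * ((t.val : ℤ) + (t₀.val : ℤ)) : ℤ)
            : ZMod (p^n)) = 0 := by
          push_cast
          rw [hTcast, hT₀cast]
          have h2 : t^2 - t₀^2 = 0 := by rw [ht, ht₀]; ring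
          linear_combination h2
        have h3 := (ZMod.intCast_zmod_eq_zero_iff_dvd _ _).mp h1
        exact_mod_cast h3
      by_cases hXz : ((t.val : ℤ) - (t₀.val : ℤ)) = 0
      · left
        exact int_dvd_val hp hkn _ _ hXcast (hXz ▸ dvd_zero _)
      have hYz : ((t.val : ℤ) + (t₀.val : ℤ)) ≠ 0 := by
        have h1 : (0:ℤ) < (t₀.val : ℤ) := by exact_mod_cast Nat.pos_of_ne_zero hT₀ne
        have h2 : (0:ℤ) ≤ (t.val : ℤ) := by positivity
        omega
      set X : ℤ := (t.val : ℤ) - (t₀.val : ℤ) with hXdef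
      set Y : ℤ := (t.val : ℤ) + (t₀.val : ℤ) with hYdef
      set α : ℕ := X.natAbs.factorization p with hαdef
      set β : ℕ := Y.natAbs.factorization p with hβdef
      have hXna : X.natAbs ≠ 0 := Int.natAbs_ne_zero.mpr hXz
      have hYna : Y.natAbs ≠ 0 := Int.natAbs_ne_zero.mpr hYz
      have hαβ : n ≤ α + β := by
        have h1 : p^n ∣ (X * Y).natAbs := by
          have h2 : ((p^n : ℕ) : ℤ) ∣ (((X*Y).natAbs : ℕ) : ℤ) := by
            rw [Int.dvd_natAbs]
            exact_mod_cast hXY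
          exact_mod_cast h2
        rw [Int.natAbs_mul] at h1
        rw [Nat.Prime.pow_dvd_iff_le_factorization hp (by positivity),
          Nat.factorization_mul hXna hYna] at h1
        simpa using h1
      have hmin : min α β ≤ f + v2 := by
        by_contra hc
        push_neg at hc
        have hdX : (p:ℤ)^(f+v2+1) ∣ X := by
          rw [← Int.dvd_natAbs]
          exact_mod_cast (Int.natCast_dvd_natCast).mpr
            (dvd_trans (pow_dvd_pow p (by omega : f+v2+1 ≤ α)) (Nat.ordProj_dvd _ _))
        have hdY : (p:ℤ)^(f+v2+1) ∣ Y := by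
          rw [← Int.dvd_natAbs]
          exact_mod_cast (Int.natCast_dvd_natCast).mpr
            (dvd_trans (pow_dvd_pow p (by omega : f+v2+1 ≤ β)) (Nat.ordProj_dvd _ _))
        have hd2T : (p:ℤ)^(f+v2+1) ∣ (2 * (t₀.val:ℤ)) := by
          have h1 := dvd_sub hdY hdX
          have h2 : Y - X = 2 * (t₀.val:ℤ) := by rw [hXdef, hYdef]; ring
          rwa [h2] at h1
        have hd2Tn : p^(f+v2+1) ∣ 2 * t₀.val := by exact_mod_cast hd2T
        apply hpf1
        rcases eq_or_ne p 2 with h2 | h2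
        · have hv2 : v2 = 1 := by simp [hv2def, h2]
          rw [hv2] at hd2Tn
          rcases hd2Tn with ⟨d, hd⟩
          have h4 : 2 * t₀.val = 2 * (p^(f+1) * d) := by rw [hd, h2]; ring
          exact ⟨d, by omega⟩
        · have hv2 : v2 = 0 := by simp [hv2def, h2]
          rw [hv2] at hd2Tn
          have hcop : Nat.Coprime (p^(f+0+1)) 2 :=
            Nat.Coprime.pow_left _ ((Nat.coprime_primes hp Nat.prime_two).mpr h2)
          exact hcop.dvd_of_dvd_mul_left hd2Tn
      by_contra hcon
      push_neg at hcon
      rcases hcon with ⟨hc1, hc2⟩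
      have hα : α < k := by
        by_contra hc
        push_neg at hc
        apply hc1
        apply int_dvd_val hp hkn _ X hXcast
        rw [← Int.dvd_natAbs]
        exact_mod_cast (Int.natCast_dvd_natCast).mpr
          (dvd_trans (pow_dvd_pow p hc) (Nat.ordProj_dvd _ _))
      have hβ : β < k := by
        by_contra hc
        push_neg at hc
        apply hc2
        apply int_dvd_val hp hkn _ Y hYcast
        rw [← Int.dvd_natAbs]
        exact_mod_cast (Int.natCast_dvd_natCast).mpr
          (dvd_trans (pow_dvd_pow p hc) (Nat.ordProj_dvd _ _))
      omega
    have hsub : (Finset.univ.filter (fun t : ZMod (p^n) => t^2 = u)) ⊆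
        (Finset.univ.filter (fun t : ZMod (p^n) => p^k ∣ (t - t₀).val)) ∪
        (Finset.univ.filter (fun t : ZMod (p^n) => p^k ∣ (t - (-t₀)).val)) := by
      intro t ht
      replace ht := (Finset.mem_filter.mp ht).2
      rcases main t ht with h | h
      · exact Finset.mem_union_left _ (Finset.mem_filter.mpr ⟨Finset.mem_univ _, h⟩)
      · exact Finset.mem_union_right _ (Finset.mem_filter.mpr ⟨Finset.mem_univ _, h⟩)
    calc (Finset.univ.filter (fun t : ZMod (p^n) => t^2 = u)).card
        ≤ ((Finset.univ.filter (fun t : ZMod (p^n) => p^k ∣ (t - t₀).val)) ∪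
           (Finset.univ.filter (fun t : ZMod (p^n) => p^k ∣ (t - (-t₀)).val))).card :=
          Finset.card_le_card hsub
      _ ≤ (Finset.univ.filter (fun t : ZMod (p^n) => p^k ∣ (t - t₀).val)).card +
          (Finset.univ.filter (fun t : ZMod (p^n) => p^k ∣ (t - (-t₀)).val)).card :=
          Finset.card_union_le _ _
      _ ≤ p^(n-k) + p^(n-k) := Nat.add_le_add (coset_card hp t₀) (coset_card hp (-t₀))
      _ ≤ 4 * p^(n/2) := by
          rw [hnk, pow_add]
          have hf : p^f ≤ p^(n/2) := Nat.pow_le_pow_right hp.pos (by omega)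
          have hm := Nat.mul_le_mul hf hv2le
          omega


lemma unit_cancel [NeZero (p^n)] (hp : p.Prime) {A : ℤ} (hA : ¬ (p:ℤ) ∣ A) (z : ZMod (p^n))
    (h : (A : ZMod (p^n)) * z = 0) : z = 0 := by
  have hz : ((A * (z.val:ℤ) : ℤ) : ZMod (p^n)) = 0 := by
    push_cast
    simp [ZMod.natCast_val, h]
  rw [ZMod.intCast_zmod_eq_zero_iff_dvd] at hz
  have hcop : IsCoprime ((p:ℤ)^n) A :=
    IsCoprime.pow_left ((Prime.coprime_iff_not_dvd (Nat.prime_iff_prime_int.mp hp)).mpr hA)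
  have h2 : ((p:ℤ))^n ∣ (z.val : ℤ) := hcop.dvd_of_dvd_mul_left (by exact_mod_cast hz)
  have h3 : p^n ∣ z.val := by exact_mod_cast h2
  have h4 : z.val = 0 := Nat.eq_zero_of_dvd_of_lt h3 (ZMod.val_lt z)
  exact (ZMod.val_eq_zero z).mp h4

lemma core [NeZero (p^n)] (hp : p.Prime) (A B C m : ℤ) (hA : ¬ (p:ℤ) ∣ A) :
    (Finset.univ.filter (fun v : ZMod (p^n) × ZMod (p^n) =>
      (A : ZMod (p^n)) * v.1^2 + (B : ZMod (p^n)) * v.1 * v.2 + (C : ZMod (p^n)) * v.2^2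
        = ((m : ℤ) : ZMod (p^n)))).card ≤ 8 * p^(n + n/2) := by
  classical
  set R := ZMod (p^n) with hRdef
  set S : Finset (R × R) := Finset.univ.filter (fun v : R × R =>
      (A : R) * v.1^2 + (B : R) * v.1 * v.2 + (C : R) * v.2^2 = ((m : ℤ) : R)) with hSdef
  set f : R × R → R × R := fun v => (2*(A:R)*v.1 + (B:R)*v.2, v.2) with hfdef
  set T : Finset (R × R) := Finset.univ.filter (fun w : R × R =>
      w.1^2 = ((B^2 - 4*A*C : ℤ) : R) * w.2^2 + ((4*A*m : ℤ) : R)) with hTdef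
  have step1 : S.card ≤ 2 * (S.image f).card := by
    apply Finset.card_le_mul_card_image
    intro w hw
    rcases Finset.mem_image.mp hw with ⟨v₀, hv₀S, hv₀⟩
    have h := Finset.card_le_card_of_injOn (f := fun v : R × R => v.1 - v₀.1)
      (s := S.filter (fun x => f x = w))
      (t := Finset.univ.filter (fun d : R => 2 * d = 0)) ?_ ?_
    · exact h.trans (ker2_card _)
    · intro v hv
      rw [Finset.mem_coe, Finset.mem_filter]
      refine ⟨Finset.mem_univ _, ?_⟩
      replace hv := (Finset.mem_filter.mp hv).2
      rw [← hv₀] at hv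
      have h1 := congrArg Prod.fst hv
      have h2 := congrArg Prod.snd hv
      simp only [hfdef] at h1 h2
      have h3 : (A:R) * (2 * (v.1 - v₀.1)) = 0 := by
        rw [h2] at h1
        linear_combination h1
      have h4 := unit_cancel hp hA _ h3
      linear_combination h4
    · intro v1 hv1 v2 hv2 he
      replace hv1 := (Finset.mem_filter.mp hv1).2
      replace hv2 := (Finset.mem_filter.mp hv2).2
      rw [← hv2] at hv1
      have h1 := congrArg Prod.fst hv1
      have h2 := congrArg Prod.snd hv1
      simp only [hfdef] at h1 h2
      have h3 : v1.1 = v2.1 := by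
        have : v1.1 - v₀.1 = v2.1 - v₀.1 := he
        exact sub_left_inj.mp this
      exact Prod.ext h3 h2
  have step2 : S.image f ⊆ T := by
    intro w hw
    rcases Finset.mem_image.mp hw with ⟨v, hvS, hv⟩
    replace hvS := (Finset.mem_filter.mp hvS).2
    rw [Finset.mem_filter]
    refine ⟨Finset.mem_univ _, ?_⟩
    rw [← hv]
    simp only [hfdef]
    push_cast +zetaDelta
    push_cast at hvS
    linear_combination (4*(A:R)) * hvS
  have step3 : T.card ≤ p^n * (4 * p^(n/2)) := by
    rw [Finset.card_eq_sum_card_fiberwise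
      (f := fun w : R × R => w.2) (t := Finset.univ) (fun x _ => Finset.mem_univ _)]
    have hbound : ∀ y : R, (T.filter (fun w : R × R => w.2 = y)).card ≤ 4 * p^(n/2) := by
      intro y
      have h := Finset.card_le_card_of_injOn (f := fun w : R × R => w.1)
        (s := T.filter (fun w : R × R => w.2 = y))
        (t := Finset.univ.filter (fun t : R =>
          t^2 = ((B^2 - 4*A*C : ℤ) : R) * y^2 + ((4*A*m : ℤ) : R))) ?_ ?_
      · exact h.trans (sqrt_card hp _)
      · intro w hw
        rw [Finset.mem_coe, Finset.mem_filter] at hw ⊢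
        refine ⟨Finset.mem_univ _, ?_⟩
        have h1 := (Finset.mem_filter.mp hw.1).2
        rw [← hw.2]
        exact h1
      · intro w1 h1 w2 h2 he
        have e1 := (Finset.mem_filter.mp h1).2
        have e2 := (Finset.mem_filter.mp h2).2
        exact Prod.ext he (e1.trans e2.symm)
    calc ∑ y ∈ Finset.univ, (T.filter (fun w : R × R => w.2 = y)).card
        ≤ ∑ _y ∈ (Finset.univ : Finset R), (4 * p^(n/2)) :=
          Finset.sum_le_sum (fun y _ => hbound y)
      _ = Fintype.card R * (4 * p^(n/2)) := by
          rw [Finset.sum_const, Finset.card_univ, smul_eq_mul]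
      _ = p^n * (4 * p^(n/2)) := by
          have hcard : Fintype.card R = p^n := ZMod.card (p^n)
          rw [hcard]
  calc S.card ≤ 2 * (S.image f).card := step1
    _ ≤ 2 * T.card := by
        have := Finset.card_le_card step2
        omega
    _ ≤ 2 * (p^n * (4 * p^(n/2))) := by omega
    _ = 8 * p^(n + n/2) := by rw [pow_add]; ring

lemma core' [NeZero (p^n)] (hp : p.Prime) (A B C m : ℤ) (hA : ¬ (p:ℤ) ∣ A) :
    Nat.card {v : ZMod (p^n) × ZMod (p^n) //
      (A : ZMod (p^n)) * v.1^2 + (B : ZMod (p^n)) * v.1 * v.2 + (C : ZMod (p^n)) * v.2^2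
        = ((m : ℤ) : ZMod (p^n))} ≤ 8 * p^(n + n/2) := by
  classical
  rw [Nat.card_eq_fintype_card, Fintype.card_subtype]
  exact core hp A B C m hA

end Aux

/-- For `q` a primitive binary quadratic form of discriminant `D < 0`, `ω ∈ ℤ` and
`Q = q − ωD`, the solution count satisfies `ρ_Q(p^n) ≤ 16 · p^{3n/2}` for every prime
power `p^n`. -/
theorem stmt_17 (a b c : ℤ) (hprim : Int.gcd a (Int.gcd b c) = 1)
    (hD : b ^ 2 - 4 * a * c < 0) (ω : ℤ) (p : ℕ) (hp : p.Prime) (n : ℕ) :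
    (Nat.card {v : ZMod (p ^ n) × ZMod (p ^ n) //
        (a : ZMod (p ^ n)) * v.1 ^ 2 + (b : ZMod (p ^ n)) * v.1 * v.2 +
            (c : ZMod (p ^ n)) * v.2 ^ 2 =
          ((ω * (b ^ 2 - 4 * a * c) : ℤ) : ZMod (p ^ n))} : ℝ) ≤
      16 * (p : ℝ) ^ (3 * (n : ℝ) / 2) := by
  classical
  haveI : NeZero (p^n) := ⟨pow_ne_zero n hp.pos.ne'⟩
  set R := ZMod (p^n) with hRdef
  set m : ℤ := ω * (b ^ 2 - 4 * a * c) with hmdef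
  have key : Nat.card {v : R × R //
      (a : R) * v.1 ^ 2 + (b : R) * v.1 * v.2 + (c : R) * v.2 ^ 2 = ((m : ℤ) : R)}
      ≤ 8 * p^(n + n/2) := by
    by_cases ha : (p:ℤ) ∣ a
    · by_cases hc : (p:ℤ) ∣ c
      · -- p ∣ a, p ∣ c, so p ∤ b, so p ∤ a + b + c
        have hb : ¬ (p:ℤ) ∣ b := by
          intro hb
          have h1 : (p:ℤ) ∣ (Int.gcd b c : ℤ) := Int.dvd_coe_gcd hb hc
          have h2 : (p:ℤ) ∣ (Int.gcd a (Int.gcd b c) : ℤ) := Int.dvd_coe_gcd ha h1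
          rw [hprim] at h2
          have := Int.le_of_dvd one_pos h2
          have := hp.two_le
          omega
        have hA : ¬ (p:ℤ) ∣ (a + b + c) := by
          intro hd
          apply hb
          have h1 : b = (a + b + c) - a - c := by ring
          rw [h1]
          exact dvd_sub (dvd_sub hd ha) hc
        have hcongr : Nat.card {v : R × R //
            (a : R) * v.1 ^ 2 + (b : R) * v.1 * v.2 + (c : R) * v.2 ^ 2 = ((m : ℤ) : R)} =
            Nat.card {v : R × R //
            ((a + b + c : ℤ) : R) * v.1 ^ 2 + ((b + 2*c : ℤ) : R) * v.1 * v.2 +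
              ((c : ℤ) : R) * v.2 ^ 2 = ((m : ℤ) : R)} := by
          apply Nat.card_congr
          apply Equiv.symm
          refine Equiv.subtypeEquiv
            ⟨fun v => (v.1, v.1 + v.2), fun v => (v.1, v.2 - v.1),
              fun v => by simp, fun v => by simp⟩ ?_
          intro v
          simp only [Equiv.coe_fn_mk]
          constructor
          · intro h
            push_cast +zetaDelta at h ⊢
            linear_combination h
          · intro h
            push_cast +zetaDelta at h ⊢
            linear_combination h
        rw [hcongr]
        exact core' hp (a+b+c) (b+2*c) c m hA
      · -- p ∤ c : swap the variables
        have hcongr : Nat.card {v : R × R //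
            (a : R) * v.1 ^ 2 + (b : R) * v.1 * v.2 + (c : R) * v.2 ^ 2 = ((m : ℤ) : R)} =
            Nat.card {v : R × R //
            ((c : ℤ) : R) * v.1 ^ 2 + ((b : ℤ) : R) * v.1 * v.2 +
              ((a : ℤ) : R) * v.2 ^ 2 = ((m : ℤ) : R)} := by
          apply Nat.card_congr
          refine Equiv.subtypeEquiv (Equiv.prodComm R R) ?_
          intro v
          simp only [Equiv.prodComm_apply, Prod.fst_swap, Prod.snd_swap]
          constructor
          · intro h; linear_combination h
          · intro h; linear_combination h
        rw [hcongr]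
        exact core' hp c b a m hc
    · exact core' hp a b c m ha
  -- numeric conclusion
  have hp1 : (1:ℝ) ≤ (p:ℝ) := by exact_mod_cast hp.one_lt.le
  set k : ℕ := n + n/2 with hkdef
  have e1 : ((8 * p^k : ℕ) : ℝ) = 8 * (p:ℝ) ^ ((k:ℕ) : ℝ) := by
    rw [Real.rpow_natCast]
    push_cast
    ring
  have hexp : ((k:ℕ) : ℝ) ≤ 3 * (n:ℝ) / 2 := by
    have h1 : 2 * k ≤ 3 * n := by omega
    have h2 : ((2 * k : ℕ) : ℝ) ≤ ((3 * n : ℕ) : ℝ) := by exact_mod_cast h1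
    push_cast at h2
    linarith
  have h3 := Real.rpow_le_rpow_of_exponent_le hp1 hexp
  have h4 : (0:ℝ) ≤ (p:ℝ) ^ ((k:ℕ) : ℝ) := Real.rpow_nonneg (by linarith) _
  calc (Nat.card {v : R × R //
      (a : R) * v.1 ^ 2 + (b : R) * v.1 * v.2 + (c : R) * v.2 ^ 2 = ((m : ℤ) : R)} : ℝ)
      ≤ ((8 * p^k : ℕ) : ℝ) := by exact_mod_cast key
    _ = 8 * (p:ℝ) ^ ((k:ℕ) : ℝ) := e1
    _ ≤ 16 * (p : ℝ) ^ (3 * (n : ℝ) / 2) := by nlinarith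
end
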